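/- Let f ∈ ℂ[X₀,X₁] be homogeneous of degree d ≥ 3 and squarefree, let F = Y^d − f(X₀,X₁) ∈ ℂ[Y,X₀,X₁], let ζ ∈ ℂ be a primitive d-th root of unity, and let σ be the ℂ-algebra automorphism of ℂ[Y,X₀,X₁] with σ(Y) = ζ·Y, σ(X₀) = X₀, σ(X₁) = X₁. Then σ(J_F) = J_F, so σ induces a ℂ-linear automorphism σ̄ of R_F^{2d−3}, and the ζ-eigenspace of σ̄ on R_F^{2d−3} is one-dimensional; it is spanned by the class of Y·h for any h ∈ S^{2d−4} with h ∉ J_f. -/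

import Mathlib

open MvPolynomial

/-- The Jacobian ideal of a binary form `f ∈ ℂ[X₀,X₁] = S`: the ideal generated by the two
partial derivatives of `f`. -/
noncomputable def jacIdealS (f : MvPolynomial (Fin 2) ℂ) : Ideal (MvPolynomial (Fin 2) ℂ) :=
  Ideal.span {pderiv 0 f, pderiv 1 f}

/-- The inclusion `S = ℂ[X₀,X₁] → T = ℂ[Y,X₀,X₁]`, where the variable `Y` of `T` is indexed
by `0` and `X₀, X₁` by `1, 2`. -/
noncomputable def embS : MvPolynomial (Fin 2) ℂ →ₐ[ℂ] MvPolynomial (Fin 3) ℂ :=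
  rename Fin.succ

/-- `F = Y^d − f(X₀,X₁) ∈ T = ℂ[Y,X₀,X₁]`. -/
noncomputable def bigF (d : ℕ) (f : MvPolynomial (Fin 2) ℂ) : MvPolynomial (Fin 3) ℂ :=
  X 0 ^ d - embS f

/-- The Jacobian ideal `J_F ⊆ T` of `F = Y^d − f`: the ideal generated by the three partial
derivatives `∂F/∂Y = d·Y^{d−1}`, `∂F/∂X₀ = −∂f/∂X₀`, `∂F/∂X₁ = −∂f/∂X₁`. -/
noncomputable def jacIdealT (d : ℕ) (f : MvPolynomial (Fin 2) ℂ) :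
    Ideal (MvPolynomial (Fin 3) ℂ) :=
  Ideal.span {pderiv 0 (bigF d f), pderiv 1 (bigF d f), pderiv 2 (bigF d f)}

/-- The `ℂ`-algebra automorphism `σ` of `T = ℂ[Y,X₀,X₁]` with `σ(Y) = ζ·Y`, `σ(X₀) = X₀`,
`σ(X₁) = X₁`. -/
noncomputable def sigmaAut (ζ : ℂ) : MvPolynomial (Fin 3) ℂ →ₐ[ℂ] MvPolynomial (Fin 3) ℂ :=
  aeval fun i => if i = 0 then ζ • X 0 else X i


-- ## Auxiliary lemmas

noncomputable section
namespace Stmt14Aux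

abbrev S2 := MvPolynomial (Fin 2) ℂ
abbrev T3 := MvPolynomial (Fin 3) ℂ

variable {σ : Type*}

lemma degree_eq_sum (m : σ →₀ ℕ) : m.degree = m.sum fun _ e => e := by
  rfl

lemma degree_add' (u v : σ →₀ ℕ) : (u + v).degree = u.degree + v.degree := by
  rw [Finsupp.degree_eq_weight_one, map_add]

lemma top_hc_ne_zero (a : MvPolynomial σ ℂ) (ha : a ≠ 0) :
    homogeneousComponent a.totalDegree a ≠ 0 := by
  obtain ⟨m, hm, hdeg⟩ := Finset.exists_mem_eq_sup a.support
    (support_nonempty.2 ha) (fun m => m.sum fun _ e => e)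
  intro h
  have h2 : coeff m (homogeneousComponent a.totalDegree a) = coeff m a := by
    rw [coeff_homogeneousComponent, if_pos]
    rw [degree_eq_sum, ← hdeg]; rfl
  rw [h, coeff_zero] at h2
  exact (mem_support_iff.1 hm) h2.symm

lemma coeff_eq_zero_of_totalDegree_lt' {a : MvPolynomial σ ℂ} {m : σ →₀ ℕ}
    (h : a.totalDegree < m.degree) : coeff m a = 0 := by
  by_contra hc
  exact absurd (le_totalDegree (mem_support_iff.2 hc)) (by rw [← degree_eq_sum] at *; omega)

lemma hc_top_mul (a b : MvPolynomial σ ℂ) :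
    homogeneousComponent (a.totalDegree + b.totalDegree) (a * b) =
      homogeneousComponent a.totalDegree a * homogeneousComponent b.totalDegree b := by
  classical
  set da := a.totalDegree
  set db := b.totalDegree
  ext m
  rw [coeff_homogeneousComponent, coeff_mul, coeff_mul]
  by_cases hm : m.degree = da + db
  · rw [if_pos hm]
    apply Finset.sum_congr rfl
    rintro ⟨u, v⟩ huv
    rw [Finset.HasAntidiagonal.mem_antidiagonal] at huv
    have hdeg : u.degree + v.degree = da + db := by
      rw [← degree_add', huv, hm]
    simp only [coeff_homogeneousComponent]
    by_cases hu : u.degree = da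
    · rw [if_pos hu, if_pos (by omega)]
    · rcases Nat.lt_or_ge u.degree da with h1 | h1
      · have : db < v.degree := by omega
        rw [coeff_eq_zero_of_totalDegree_lt' this, if_neg hu, mul_zero, zero_mul]
      · have : da < u.degree := by omega
        rw [coeff_eq_zero_of_totalDegree_lt' this, if_neg hu, zero_mul, zero_mul]
  · rw [if_neg hm]
    symm
    apply Finset.sum_eq_zero
    rintro ⟨u, v⟩ huv
    rw [Finset.HasAntidiagonal.mem_antidiagonal] at huv
    have hdeg : u.degree + v.degree = m.degree := by rw [← degree_add', huv]
    simp only [coeff_homogeneousComponent]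
    by_cases hu : u.degree = da
    · rw [if_neg (show ¬ v.degree = db by omega), mul_zero]
    · rw [if_neg hu, zero_mul]

lemma totalDegree_mul_eq {a b : MvPolynomial σ ℂ} (ha : a ≠ 0) (hb : b ≠ 0) :
    (a * b).totalDegree = a.totalDegree + b.totalDegree := by
  refine le_antisymm (totalDegree_mul a b) ?_
  by_contra hlt
  push_neg at hlt
  have h0 : homogeneousComponent (a.totalDegree + b.totalDegree) (a * b) = 0 :=
    homogeneousComponent_eq_zero _ _ hlt
  rw [hc_top_mul] at h0
  exact mul_ne_zero (top_hc_ne_zero a ha) (top_hc_ne_zero b hb) h0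

lemma totalDegree_le_of_dvd {a b : MvPolynomial σ ℂ} (h : a ∣ b) (hb : b ≠ 0) :
    a.totalDegree ≤ b.totalDegree := by
  obtain ⟨c, rfl⟩ := h
  have ha : a ≠ 0 := fun h => by simp [h] at hb
  have hc : c ≠ 0 := fun h => by simp [h] at hb
  rw [totalDegree_mul_eq ha hc]; omega




lemma degree_single' {σ : Type*} (i : σ) (k : ℕ) : (Finsupp.single i k).degree = k := by
  rcases Nat.eq_zero_or_pos k with rfl | hk
  · simp [Finsupp.degree]
  · exact Finsupp.degree_single i k


lemma isHomogeneous_iff_deg {f : S2} {n : ℕ} :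
    f.IsHomogeneous n ↔ ∀ m : Fin 2 →₀ ℕ, coeff m f ≠ 0 → m.degree = n := by
  constructor
  · intro H m hm
    rw [Finsupp.degree_eq_weight_one]
    exact H hm
  · intro H m hm
    rw [Pi.one_def, ← Finsupp.degree_eq_weight_one]  -- goal : weight 1 m = n
    exact H m hm

lemma coeff_pderiv (i : Fin 2) (φ : S2) (m : Fin 2 →₀ ℕ) :
    coeff m (pderiv i φ) = ((m i : ℂ) + 1) * coeff (m + Finsupp.single i 1) φ := by
  induction φ using MvPolynomial.induction_on' with
  | monomial s a =>
    rw [pderiv_monomial]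
    rcases Nat.eq_zero_or_pos (s i) with hs | hs
    · have h1 : s ≠ m + Finsupp.single i 1 := by
        intro h
        apply absurd hs
        rw [h]; simp
      rw [coeff_monomial, coeff_monomial, if_neg h1, mul_zero]
      split_ifs with h2
      · simp [hs]
      · simp
    · have key : s - Finsupp.single i 1 = m ↔ s = m + Finsupp.single i 1 := by
        constructor
        · intro h; ext j
          rw [← h]
          by_cases hj : j = i
          · subst hj; simp [Nat.sub_add_cancel hs]
          · simp [Finsupp.single_apply, hj, Ne.symm hj]
        · intro h; subst h; ext j
          by_cases hj : j = i
          · subst hj; simp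
          · simp [Finsupp.single_apply, hj, Ne.symm hj]
      rw [coeff_monomial, coeff_monomial]
      split_ifs with h1 h2 h2
      · have : s i = m i + 1 := by rw [h2]; simp
        rw [this]; push_cast; ring
      · exact absurd (key.1 h1) h2
      · exact absurd (key.2 h2) h1
      · rw [mul_zero]
  | add p q hp hq => simp [hp, hq, mul_add]

lemma coeff_eq_zero_of_pderiv_eq_zero {φ : S2} {i : Fin 2} (h : pderiv i φ = 0)
    {m : Fin 2 →₀ ℕ} (hm : m i ≠ 0) : coeff m φ = 0 := by
  set m' := m - Finsupp.single i 1 with hm'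
  have key := coeff_pderiv i φ m'
  rw [h, coeff_zero] at key
  have hmm : m' + Finsupp.single i 1 = m := by
    rw [hm']
    ext j
    by_cases hj : j = i
    · subst hj; simp [Nat.sub_add_cancel (Nat.one_le_iff_ne_zero.2 hm)]
    · simp [Finsupp.single_apply, hj, Ne.symm hj]
  rw [hmm] at key
  have : ((m' i : ℂ) + 1) ≠ 0 := Nat.cast_add_one_ne_zero _
  field_simp at key
  exact (mul_eq_zero.1 key.symm).resolve_left this

lemma eq_C_of_pderivs_eq_zero {φ : S2} (h0 : pderiv 0 φ = 0) (h1 : pderiv 1 φ = 0) :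
    φ = C (coeff 0 φ) := by
  ext m
  by_cases hm : m = 0
  · subst hm; simp
  · have : m 0 ≠ 0 ∨ m 1 ≠ 0 := by
      by_contra hc
      push_neg at hc
      apply hm
      ext j; fin_cases j <;> simp [hc.1, hc.2]
    rcases this with h | h
    · rw [coeff_eq_zero_of_pderiv_eq_zero h0 h, coeff_C, if_neg (Ne.symm hm)]
    · rw [coeff_eq_zero_of_pderiv_eq_zero h1 h, coeff_C, if_neg (Ne.symm hm)]




lemma degree_eq_sum' {σ : Type*} (m : σ →₀ ℕ) : m.degree = m.sum fun _ e => e := rfl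

lemma deg2 (m : Fin 2 →₀ ℕ) : m.degree = m 0 + m 1 := by
  rw [Finsupp.degree_apply, Finset.sum_subset (Finset.subset_univ _)
    (fun i _ hi => Finsupp.notMem_support_iff.1 hi)]
  exact Fin.sum_univ_two m

lemma X_mul_pderiv_monomial (i : Fin 2) (m : Fin 2 →₀ ℕ) (c : ℂ) :
    X i * pderiv i (monomial m c) = monomial m (c * m i) := by
  rcases Nat.eq_zero_or_pos (m i) with hs | hs
  · simp [pderiv_monomial, hs]
  · have hmm : Finsupp.single i 1 + (m - Finsupp.single i 1) = m := by
      ext j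
      by_cases hj : j = i
      · subst hj; simp [Nat.add_sub_cancel' hs]
      · simp [Finsupp.single_apply, hj, Ne.symm hj]
    rw [pderiv_monomial, show (X i : S2) = monomial (Finsupp.single i 1) 1 from rfl,
      monomial_mul, one_mul, hmm]

lemma euler2 {f : S2} {d : ℕ} (hf : f.IsHomogeneous d) :
    X 0 * pderiv 0 f + X 1 * pderiv 1 f = C (d : ℂ) * f := by
  conv_lhs => rw [f.as_sum]
  conv_rhs => rw [f.as_sum]
  rw [map_sum (pderiv 0), map_sum (pderiv 1), Finset.mul_sum, Finset.mul_sum, Finset.mul_sum,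
    ← Finset.sum_add_distrib]
  apply Finset.sum_congr rfl
  intro m hm
  have hdeg : m.degree = d := isHomogeneous_iff_deg.1 hf m (mem_support_iff.1 hm)
  rw [X_mul_pderiv_monomial, X_mul_pderiv_monomial, C_mul_monomial,
    ← map_add (monomial m)]
  congr 1
  rw [deg2] at hdeg
  push_cast [← hdeg]
  ring

lemma pderiv_isHomogeneous {f : S2} {d : ℕ} (i : Fin 2) (hf : f.IsHomogeneous d) :
    (pderiv i f).IsHomogeneous (d - 1) := by
  rw [isHomogeneous_iff_deg]
  intro m hm
  rw [coeff_pderiv] at hm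
  have h2 : coeff (m + Finsupp.single i 1) f ≠ 0 := by
    intro h; rw [h, mul_zero] at hm; exact hm rfl
  have h3 := isHomogeneous_iff_deg.1 hf _ h2
  rw [degree_add', degree_single'] at h3
  omega

lemma X_not_unit (i : Fin 2) : ¬ IsUnit (X i : S2) := by
  intro h
  have h1 := totalDegree_le_of_dvd (isUnit_iff_dvd_one.1 h) one_ne_zero
  rw [totalDegree_X, totalDegree_one] at h1
  omega

lemma pderiv_totalDegree_lt {φ : S2} {i : Fin 2} (h : pderiv i φ ≠ 0) :
    (pderiv i φ).totalDegree < φ.totalDegree := by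
  obtain ⟨m, hm, hdeg⟩ := Finset.exists_mem_eq_sup (pderiv i φ).support
    (support_nonempty.2 h) (fun m => m.sum fun _ e => e)
  have h2 : coeff (m + Finsupp.single i 1) φ ≠ 0 := by
    have hc := coeff_pderiv i φ m
    intro hcc
    rw [hcc, mul_zero] at hc
    exact (mem_support_iff.1 hm) hc
  have h3 := le_totalDegree (mem_support_iff.2 h2)
  rw [← degree_eq_sum'] at h3
  rw [degree_add', degree_single'] at h3
  have h4 : (pderiv i φ).totalDegree = m.degree := by
    rw [MvPolynomial.totalDegree, hdeg, degree_eq_sum']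
  omega

lemma pderiv_ne_zero {f : S2} {d : ℕ} (hd : 3 ≤ d) (hf : f.IsHomogeneous d)
    (hsf : Squarefree f) (i : Fin 2) : pderiv i f ≠ 0 := by
  intro h
  set j : Fin 2 := if i = 0 then 1 else 0 with hj
  have hdvd : (X j : S2) * X j ∣ f := by
    conv_rhs => rw [f.as_sum]
    apply Finset.dvd_sum
    intro m hm
    have hmi : m i = 0 := by
      by_contra hc
      exact (mem_support_iff.1 hm) (coeff_eq_zero_of_pderiv_eq_zero h hc)
    have hdm : m.degree = d := isHomogeneous_iff_deg.1 hf m (mem_support_iff.1 hm)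
    rw [deg2] at hdm
    have hmj : 2 ≤ m j := by
      fin_cases i <;> simp_all [hj] <;> omega
    refine ⟨monomial (m - Finsupp.single j 2) (coeff m f), ?_⟩
    have hXX : (X j : S2) * X j = monomial (Finsupp.single j 2) 1 := by
      rw [← X_pow_eq_monomial, pow_two]
    have hms : Finsupp.single j 2 + (m - Finsupp.single j 2) = m := by
      ext k
      by_cases hk : k = j
      · subst hk; simp [Nat.add_sub_cancel' hmj]
      · simp [Finsupp.single_apply, hk, Ne.symm hk]
    rw [hXX, monomial_mul, one_mul, hms]
  exact X_not_unit j (hsf _ hdvd)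

lemma isRelPrime_pderivs {f : S2} {d : ℕ} (hd : 3 ≤ d) (hf : f.IsHomogeneous d)
    (hsf : Squarefree f) : IsRelPrime (pderiv 0 f) (pderiv 1 f) := by
  intro z hz0 hz1
  by_contra hz
  have hz0' : pderiv 0 f ≠ 0 := pderiv_ne_zero hd hf hsf 0
  have hzne : z ≠ 0 := by rintro rfl; exact hz0' (zero_dvd_iff.1 hz0)
  obtain ⟨p, hpirr, hpz⟩ := WfDvdMonoid.exists_irreducible_factor hz hzne
  have hp : Prime p := UniqueFactorizationMonoid.irreducible_iff_prime.1 hpirr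
  have hp0 : p ∣ pderiv 0 f := hpz.trans hz0
  have hp1 : p ∣ pderiv 1 f := hpz.trans hz1
  have hdC : IsUnit (C (d : ℂ) : S2) := by
    apply IsUnit.of_mul_eq_one (C (d : ℂ)⁻¹)
    rw [← C_mul, mul_inv_cancel₀, C_1]
    exact_mod_cast Nat.cast_ne_zero.2 (by omega : d ≠ 0)
  have hpf : p ∣ f := by
    have h1 : p ∣ C (d : ℂ) * f := by
      rw [← euler2 hf]
      exact dvd_add (Dvd.dvd.mul_left hp0 _) (Dvd.dvd.mul_left hp1 _)
    obtain ⟨u, hu⟩ := hdC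
    rw [← hu] at h1; exact Units.dvd_mul_left.1 h1
  obtain ⟨g, hg⟩ := hpf
  have hpg : ¬ p ∣ g := by
    rintro ⟨g', rfl⟩
    exact hp.not_unit (hsf p ⟨g', by rw [hg]; ring⟩)
  have key : ∀ i : Fin 2, pderiv i p = 0 := by
    intro i
    have hpi : p ∣ pderiv i f := by
      fin_cases i
      · exact hp0
      · exact hp1
    have hdvd : p ∣ pderiv i p * g := by
      have heq : pderiv i p * g = pderiv i f - p * pderiv i g := by
        rw [hg, pderiv_mul]; ring
      rw [heq]
      exact dvd_sub hpi (Dvd.intro _ rfl)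
    have hpd : p ∣ pderiv i p := by
      rcases (Prime.dvd_mul hp).1 hdvd with h1 | h1
      · exact h1
      · exact absurd h1 hpg
    by_contra hne
    have h1 := totalDegree_le_of_dvd hpd hne
    have h2 := pderiv_totalDegree_lt hne
    omega
  have hC := eq_C_of_pderivs_eq_zero (key 0) (key 1)
  rcases eq_or_ne (coeff 0 p) 0 with hc | hc
  · rw [hc, map_zero] at hC
    exact hp.ne_zero hC
  · apply hp.not_unit
    rw [hC]
    exact IsUnit.of_mul_eq_one (C (coeff 0 p)⁻¹) (by rw [← C_mul, mul_inv_cancel₀ hc, C_1])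



/-- the weight function on `Fin 3` giving `Y` weight `1` and `X₀, X₁` weight `0` -/
def wY : Fin 3 → ℕ := fun i => if i = 0 then 1 else 0

lemma weight_wY (m : Fin 3 →₀ ℕ) : Finsupp.weight wY m = m 0 := by
  rw [Finsupp.weight_apply, Finsupp.sum]
  rw [Finset.sum_subset (Finset.subset_univ _)
    (fun i _ hi => by rw [Finsupp.notMem_support_iff.1 hi, zero_smul])]
  rw [Fin.sum_univ_three]
  simp [wY]

lemma deg3 (m : Fin 3 →₀ ℕ) : m.degree = m 0 + m 1 + m 2 := by
  rw [Finsupp.degree_apply, Finset.sum_subset (Finset.subset_univ _)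
    (fun i _ hi => Finsupp.notMem_support_iff.1 hi)]
  exact Fin.sum_univ_three m

lemma isHomogeneous_iff_deg' {σ : Type*} {f : MvPolynomial σ ℂ} {n : ℕ} :
    f.IsHomogeneous n ↔ ∀ m : σ →₀ ℕ, coeff m f ≠ 0 → m.degree = n := by
  constructor
  · intro H m hm
    rw [Finsupp.degree_eq_weight_one]
    exact H hm
  · intro H m hm
    rw [Pi.one_def, ← Finsupp.degree_eq_weight_one]
    exact H m hm

-- pderiv computations
lemma pderiv0_embS (q : S2) : pderiv 0 (embS q) = 0 := by
  classical
  apply pderiv_eq_zero_of_notMem_vars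
  intro h
  have := vars_rename Fin.succ q h
  simp only [Finset.mem_image] at this
  obtain ⟨i, _, hi⟩ := this
  exact Fin.succ_ne_zero i hi

lemma pderiv_succ_embS (i : Fin 2) (q : S2) :
    pderiv i.succ (embS q) = embS (pderiv i q) :=
  pderiv_rename (Fin.succ_injective 2) i q

lemma succ0 : (0 : Fin 2).succ = 1 := rfl
lemma succ1 : (1 : Fin 2).succ = 2 := rfl

lemma pd0 (d : ℕ) (f : S2) : pderiv 0 (bigF d f) = (d : T3) * X 0 ^ (d - 1) := by
  rw [bigF, map_sub, pderiv0_embS, sub_zero, pderiv_pow, pderiv_X_self, mul_one]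

lemma pd1 (d : ℕ) (f : S2) : pderiv 1 (bigF d f) = - embS (pderiv 0 f) := by
  rw [bigF, map_sub, pderiv_pow, pderiv_X_of_ne (by decide : (0 : Fin 3) ≠ 1), mul_zero,
    zero_sub, ← succ0, pderiv_succ_embS]

lemma pd2 (d : ℕ) (f : S2) : pderiv 2 (bigF d f) = - embS (pderiv 1 f) := by
  rw [bigF, map_sub, pderiv_pow, pderiv_X_of_ne (by decide : (0 : Fin 3) ≠ 2), mul_zero,
    zero_sub, ← succ1, pderiv_succ_embS]

lemma natCast_eq_C (d : ℕ) : ((d : ℕ) : T3) = C ((d : ℕ) : ℂ) := by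
  simp

lemma jacT_eq {d : ℕ} (hd : 3 ≤ d) (f : S2) :
    jacIdealT d f =
      Ideal.span {X 0 ^ (d - 1), embS (pderiv 0 f), embS (pderiv 1 f)} := by
  have hdC : ((d : ℕ) : ℂ) ≠ 0 := Nat.cast_ne_zero.2 (by omega)
  apply le_antisymm
  · rw [jacIdealT, Ideal.span_le]
    intro x hx
    simp only [Set.mem_insert_iff, Set.mem_singleton_iff] at hx
    rcases hx with rfl | rfl | rfl
    · rw [pd0]
      exact Ideal.mul_mem_left _ _ (Ideal.subset_span (by simp))
    · rw [pd1]
      exact neg_mem (Ideal.subset_span (by simp))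
    · rw [pd2]
      exact neg_mem (Ideal.subset_span (by simp))
  · rw [Ideal.span_le]
    intro x hx
    simp only [Set.mem_insert_iff, Set.mem_singleton_iff] at hx
    rcases hx with rfl | rfl | rfl
    · have hX : (X 0 : T3) ^ (d - 1) = C (((d : ℕ) : ℂ))⁻¹ * pderiv 0 (bigF d f) := by
        rw [pd0, natCast_eq_C, ← mul_assoc, ← C_mul, inv_mul_cancel₀ hdC, C_1, one_mul]
      rw [hX, jacIdealT]
      exact Ideal.mul_mem_left _ _ (Ideal.subset_span (by simp))
    · have hX : embS (pderiv 0 f) = - pderiv 1 (bigF d f) := by rw [pd1, neg_neg]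
      rw [hX, jacIdealT]
      exact neg_mem (Ideal.subset_span (by simp))
    · have hX : embS (pderiv 1 f) = - pderiv 2 (bigF d f) := by rw [pd2, neg_neg]
      rw [hX, jacIdealT]
      exact neg_mem (Ideal.subset_span (by simp))

-- sigma computations
lemma sigma_X0 (ζ : ℂ) : sigmaAut ζ (X 0) = ζ • X 0 := by
  rw [sigmaAut, aeval_X, if_pos rfl]

lemma sigma_embS (ζ : ℂ) (q : S2) : sigmaAut ζ (embS q) = embS q := by
  rw [sigmaAut, embS, aeval_rename]
  have : ((fun i : Fin 3 => if i = 0 then ζ • X 0 else X i) ∘ Fin.succ) =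
      (X ∘ Fin.succ : Fin 2 → T3) := by
    funext i
    simp [Fin.succ_ne_zero i]
  rw [this, ← aeval_rename, aeval_X_left_apply]

lemma sigma_monomial (ζ : ℂ) (m : Fin 3 →₀ ℕ) (c : ℂ) :
    sigmaAut ζ (monomial m c) = ζ ^ (m 0) • monomial m c := by
  have hmono : (monomial m c : T3) = C c * (X 0 ^ (m 0) * (X 1 ^ (m 1) * X 2 ^ (m 2))) := by
    rw [monomial_eq, Finsupp.prod_fintype _ _ (fun i => pow_zero _), Fin.prod_univ_three]
    ring
  have h1 : sigmaAut ζ (X 1) = X 1 := by rw [sigmaAut, aeval_X, if_neg (by decide)]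
  have h2 : sigmaAut ζ (X 2) = X 2 := by rw [sigmaAut, aeval_X, if_neg (by decide)]
  have hC : sigmaAut ζ (C c) = C c := by
    rw [show (C c : T3) = algebraMap ℂ T3 c from rfl]
    exact AlgHom.commutes _ c
  rw [hmono, map_mul, map_mul, map_mul, map_pow, map_pow, map_pow, sigma_X0, h1, h2, hC]
  rw [smul_pow, smul_eq_C_mul, smul_eq_C_mul]
  ring
lemma coeff_sigma (ζ : ℂ) (P : T3) (m : Fin 3 →₀ ℕ) :
    coeff m (sigmaAut ζ P) = ζ ^ (m 0) * coeff m P := by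
  classical
  conv_lhs => rw [P.as_sum, map_sum]
  rw [coeff_sum]
  have : ∀ u ∈ P.support, coeff m (sigmaAut ζ (monomial u (coeff u P))) =
      if u = m then ζ ^ (u 0) * coeff u P else 0 := by
    intro u _
    rw [sigma_monomial, coeff_smul, coeff_monomial, smul_eq_mul, mul_ite, mul_zero]
  rw [Finset.sum_congr rfl this, Finset.sum_ite_eq' P.support m]
  by_cases hm : m ∈ P.support
  · rw [if_pos hm]
  · rw [if_neg hm, notMem_support_iff.1 hm, mul_zero]

/-- weighted homogeneous component extraction commutes with σ up to `ζ^k` -/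
lemma comp_sigma (ζ : ℂ) (P : T3) (k : ℕ) :
    weightedHomogeneousComponent wY k (sigmaAut ζ P) =
      ζ ^ k • weightedHomogeneousComponent wY k P := by
  classical
  ext m
  rw [coeff_smul, coeff_weightedHomogeneousComponent, coeff_weightedHomogeneousComponent,
    coeff_sigma, weight_wY]
  by_cases hm : m 0 = k
  · rw [if_pos hm, if_pos hm, hm, smul_eq_mul]
  · rw [if_neg hm, if_neg hm, smul_zero]

/-- components of a product with a weighted homogeneous polynomial -/
lemma comp_mul_wh {g : T3} {e : ℕ} (hg : IsWeightedHomogeneous wY g e) (A : T3) (k : ℕ) :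
    weightedHomogeneousComponent wY k (A * g) =
      if e ≤ k then weightedHomogeneousComponent wY (k - e) A * g else 0 := by
  classical
  have hfin := weightedHomogeneousComponent_finsupp (w := wY) A
  have h1 : ∑ j ∈ hfin.toFinset, weightedHomogeneousComponent wY j A = A := by
    rw [← finsum_eq_sum _ hfin]
    exact sum_weightedHomogeneousComponent wY A
  conv_lhs => rw [← h1, Finset.sum_mul, map_sum]
  have hterm : ∀ j ∈ hfin.toFinset,
      weightedHomogeneousComponent wY k (weightedHomogeneousComponent wY j A * g) =
      if j + e = k then weightedHomogeneousComponent wY j A * g else 0 := by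
    intro j _
    have hwh := (weightedHomogeneousComponent_isWeightedHomogeneous j A (w := wY)).mul hg
    split_ifs with hjk
    · exact IsWeightedHomogeneous.weightedHomogeneousComponent_same (hjk ▸ hwh)
    · exact IsWeightedHomogeneous.weightedHomogeneousComponent_ne _ hwh
        (by omega)
  rw [Finset.sum_congr rfl hterm]
  by_cases hek : e ≤ k
  · rw [if_pos hek]
    have hiff : ∀ j : ℕ, (j + e = k) = (j = k - e) := by
      intro j; apply propext; omega
    simp_rw [hiff]
    rw [Finset.sum_ite_eq' hfin.toFinset (k - e)]
    by_cases hks : k - e ∈ hfin.toFinset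
    · rw [if_pos hks]
    · rw [if_neg hks]
      have : weightedHomogeneousComponent wY (k - e) A = 0 := by
        by_contra hc
        exact hks (hfin.mem_toFinset.2 hc)
      rw [this, zero_mul]
  · rw [if_neg hek]
    apply Finset.sum_eq_zero
    intro j _
    rw [if_neg (by omega)]

lemma wh_embS (q : S2) : IsWeightedHomogeneous wY (embS q) 0 := by
  classical
  intro m hm
  rw [weight_wY]
  have hsup : m ∈ (embS q).support := mem_support_iff.2 hm
  rw [show embS q = rename Fin.succ q from rfl,
    support_rename_of_injective (Fin.succ_injective 2)] at hsup
  rw [Finset.mem_image] at hsup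
  obtain ⟨u, _, rfl⟩ := hsup
  apply Finsupp.mapDomain_notin_range
  rintro ⟨i, hi⟩
  exact Fin.succ_ne_zero i hi
lemma wh_X0pow (e : ℕ) : IsWeightedHomogeneous wY ((X 0 : T3) ^ e) e := by
  rw [X_pow_eq_monomial]
  apply isWeightedHomogeneous_monomial
  rw [weight_wY]
  simp

/-- every component of an element of `J_F` is in `J_F` -/
lemma comp_mem_jacT {d : ℕ} (hd : 3 ≤ d) {f : S2} {P : T3} (hP : P ∈ jacIdealT d f) (k : ℕ) :
    weightedHomogeneousComponent wY k P ∈ jacIdealT d f := by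
  rw [jacT_eq hd] at hP ⊢
  rw [Ideal.mem_span_insert] at hP
  obtain ⟨A, z, hz, rfl⟩ := hP
  rw [Ideal.mem_span_pair] at hz
  obtain ⟨B, C', rfl⟩ := hz
  rw [map_add, map_add]
  refine Ideal.add_mem _ ?_ (Ideal.add_mem _ ?_ ?_)
  · rw [comp_mul_wh (wh_X0pow (d - 1))]
    split_ifs
    · exact Ideal.mul_mem_left _ _ (Ideal.subset_span (by simp))
    · exact zero_mem _
  · rw [comp_mul_wh (wh_embS _)]
    split_ifs
    · exact Ideal.mul_mem_left _ _ (Ideal.subset_span (by simp))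
    · exact zero_mem _
  · rw [comp_mul_wh (wh_embS _)]
    split_ifs
    · exact Ideal.mul_mem_left _ _ (Ideal.subset_span (by simp))
    · exact zero_mem _

/-- a weighted homogeneous polynomial of weight `≥ e` is divisible by `Y^e` -/
lemma X0pow_dvd_wh {Q : T3} {k e : ℕ} (hQ : IsWeightedHomogeneous wY Q k) (hek : e ≤ k) :
    (X 0 : T3) ^ e ∣ Q := by
  conv_rhs => rw [Q.as_sum]
  apply Finset.dvd_sum
  intro m hm
  have hm0 : m 0 = k := by
    rw [← weight_wY m]
    exact hQ (mem_support_iff.1 hm)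
  refine ⟨monomial (m - Finsupp.single 0 e) (coeff m Q), ?_⟩
  have hms : Finsupp.single (0 : Fin 3) e + (m - Finsupp.single 0 e) = m := by
    ext j
    by_cases hj : j = 0
    · subst hj
      simp only [Finsupp.coe_add, Pi.add_apply, Finsupp.coe_tsub, Pi.sub_apply,
        Finsupp.single_eq_same]
      omega
    · simp [Finsupp.single_apply, hj, Ne.symm hj]
  rw [X_pow_eq_monomial, monomial_mul, one_mul, hms]

/-- a weighted homogeneous polynomial of weight 1 is `Y` times a polynomial in the `X`'s -/
lemma wh1_decomp {Q : T3} (hQ : IsWeightedHomogeneous wY Q 1) :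
    ∃ q : S2, Q = X 0 * embS q ∧ ∀ n : ℕ, Q.IsHomogeneous n → q.IsHomogeneous (n - 1) := by
  classical
  set q : S2 := ∑ m ∈ Q.support,
    monomial (Finsupp.single 0 (m 1) + Finsupp.single 1 (m 2)) (coeff m Q) with hq
  have hm0 : ∀ m ∈ Q.support, m 0 = 1 := by
    intro m hm
    rw [← weight_wY m]
    exact hQ (mem_support_iff.1 hm)
  have key : ∀ m ∈ Q.support,
      X 0 * embS (monomial (Finsupp.single 0 (m 1) + Finsupp.single 1 (m 2)) (coeff m Q)) =
      monomial m (coeff m Q) := by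
    intro m hm
    have hms : Finsupp.single (0 : Fin 3) 1 +
        (Finsupp.single ((0 : Fin 2).succ) (m 1) + Finsupp.single ((1 : Fin 2).succ) (m 2)) =
        m := by
      ext j
      have h1 := hm0 m hm
      fin_cases j <;>
        simp_all [Finsupp.single_apply, show ((0:Fin 2).succ : Fin 3) = 1 from rfl,
          show ((1:Fin 2).succ : Fin 3) = 2 from rfl]
    rw [show embS = (rename (Fin.succ) : S2 →ₐ[ℂ] T3) from rfl, rename_monomial,
      Finsupp.mapDomain_add, Finsupp.mapDomain_single, Finsupp.mapDomain_single,
      show (X 0 : T3) = monomial (Finsupp.single 0 1) 1 from rfl, monomial_mul, one_mul, hms]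
  refine ⟨q, ?_, ?_⟩
  · rw [hq, map_sum, Finset.mul_sum]
    conv_lhs => rw [Q.as_sum]
    exact (Finset.sum_congr rfl key).symm
  · intro n hn
    rw [hq]
    refine MvPolynomial.IsHomogeneous.sum Q.support _ _ (fun m hm => ?_)
    apply isHomogeneous_monomial
    have hdm : m.degree = n := isHomogeneous_iff_deg'.1 hn m (mem_support_iff.1 hm)
    rw [deg3] at hdm
    have h1 := hm0 m hm
    rw [degree_add', degree_single', degree_single']
    omega



/-- the monomial exponent `X₀^i X₁^(n-i)` -/
def mono2 (n : ℕ) (i : Fin (n + 1)) : Fin 2 →₀ ℕ :=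
  Finsupp.single 0 (i : ℕ) + Finsupp.single 1 (n - (i : ℕ))

lemma mono2_apply0 (n : ℕ) (i : Fin (n + 1)) : mono2 n i 0 = (i : ℕ) := by
  simp [mono2, Finsupp.single_apply]

lemma mono2_degree (n : ℕ) (i : Fin (n + 1)) : (mono2 n i).degree = n := by
  have := i.isLt
  rw [mono2, deg2]
  simp [Finsupp.single_apply]
  omega

lemma eq_mono2 {n : ℕ} {m : Fin 2 →₀ ℕ} (hm : m.degree = n) :
    m = mono2 n ⟨m 0, by rw [deg2] at hm; omega⟩ := by
  have h0 : m 0 ≤ n := by rw [deg2] at hm; omega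
  ext j
  fin_cases j
  · simp [mono2, Finsupp.single_apply]
  · rw [deg2] at hm
    simp [mono2, Finsupp.single_apply]
    omega

lemma homog_eq_sum {n : ℕ} {p : S2} (hp : p.IsHomogeneous n) :
    p = ∑ i : Fin (n + 1), monomial (mono2 n i) (coeff (mono2 n i) p) := by
  ext m
  rw [coeff_sum]
  by_cases hm : m.degree = n
  · rw [Finset.sum_eq_single (⟨m 0, by rw [deg2] at hm; omega⟩ : Fin (n + 1))]
    · rw [coeff_monomial, if_pos (eq_mono2 hm).symm, ← eq_mono2 hm]
    · intro i _ hi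
      rw [coeff_monomial, if_neg]
      intro hc
      apply hi
      have := congrArg (fun m : Fin 2 →₀ ℕ => m 0) hc
      simp only [mono2_apply0] at this
      exact Fin.ext this
    · intro hc; exact absurd (Finset.mem_univ _) hc
  · rw [isHomogeneous_iff_deg] at hp
    have hcopz : coeff m p = 0 := by
      by_contra hc; exact hm (hp m hc)
    rw [hcopz]
    symm
    apply Finset.sum_eq_zero
    intro i _
    rw [coeff_monomial, if_neg]
    intro hc
    rw [← hc, mono2_degree] at hm
    exact hm rfl

/-- the linear equivalence between binary forms of degree `n` and `ℂ^(n+1)` -/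
def homEquiv (n : ℕ) : (homogeneousSubmodule (Fin 2) ℂ n) ≃ₗ[ℂ] (Fin (n + 1) → ℂ) := by
  refine LinearEquiv.ofLinear
    (LinearMap.pi fun i => (lcoeff ℂ (mono2 n i)).comp (Submodule.subtype _))
    (LinearMap.codRestrict _ (∑ i : Fin (n + 1),
        ((monomial (mono2 n i)).comp (LinearMap.proj i))) ?_) ?_ ?_
  · intro v
    rw [mem_homogeneousSubmodule]
    simp only [LinearMap.sum_apply, LinearMap.comp_apply, LinearMap.proj_apply]
    exact MvPolynomial.IsHomogeneous.sum _ _ _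
      (fun i _ => isHomogeneous_monomial _ (mono2_degree n i))
  · apply LinearMap.ext
    intro v
    funext i
    simp only [LinearMap.comp_apply, LinearMap.pi_apply, LinearMap.codRestrict_apply,
      LinearMap.sum_apply, LinearMap.proj_apply, lcoeff_apply, Submodule.coe_subtype,
      LinearMap.id_apply]
    rw [coeff_sum]
    rw [Finset.sum_eq_single i]
    · rw [coeff_monomial, if_pos rfl]
    · intro j _ hj
      rw [coeff_monomial, if_neg]
      intro hc
      apply hj
      have := congrArg (fun m : Fin 2 →₀ ℕ => m 0) hc
      simp only [mono2_apply0] at this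
      exact Fin.ext this
    · intro hc; exact absurd (Finset.mem_univ _) hc
  · apply LinearMap.ext
    rintro ⟨p, hp⟩
    apply Subtype.ext
    simp only [LinearMap.comp_apply, LinearMap.codRestrict_apply, LinearMap.sum_apply,
      LinearMap.pi_apply, LinearMap.proj_apply, lcoeff_apply, Submodule.coe_subtype,
      LinearMap.id_apply]
    exact (homog_eq_sum ((mem_homogeneousSubmodule _ _).1 hp)).symm

instance homFD (n : ℕ) : FiniteDimensional ℂ (homogeneousSubmodule (Fin 2) ℂ n) :=
  Module.Finite.equiv (homEquiv n).symm

lemma homFinrank (n : ℕ) :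
    Module.finrank ℂ (homogeneousSubmodule (Fin 2) ℂ n) = n + 1 := by
  rw [(homEquiv n).finrank_eq, Module.finrank_fin_fun]

lemma exists_smul_sub_mem {f : S2} {d : ℕ} (hd : 3 ≤ d) (hf : f.IsHomogeneous d)
    (hsf : Squarefree f) {h : S2} (hh : h.IsHomogeneous (2 * d - 4))
    (hnot : h ∉ Ideal.span {pderiv 0 f, pderiv 1 f}) {p : S2}
    (hp : p.IsHomogeneous (2 * d - 4)) :
    ∃ c : ℂ, p - c • h ∈ Ideal.span {pderiv 0 f, pderiv 1 f} := by
  set f0 := pderiv 0 f with hf0def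
  set f1 := pderiv 1 f with hf1def
  have hf0 : f0.IsHomogeneous (d - 1) := pderiv_isHomogeneous 0 hf
  have hf1 : f1.IsHomogeneous (d - 1) := pderiv_isHomogeneous 1 hf
  have hn0 : f0 ≠ 0 := pderiv_ne_zero hd hf hsf 0
  have hn1 : f1 ≠ 0 := pderiv_ne_zero hd hf hsf 1
  set e := d - 3 with he
  set N := 2 * d - 4 with hN
  have hadd : e + (d - 1) = N := by omega
  have hmem : ∀ (a : homogeneousSubmodule (Fin 2) ℂ e) (b : homogeneousSubmodule (Fin 2) ℂ e)
      (c : ℂ), ((a : S2) * f0 + (b : S2) * f1 + c • h) ∈ homogeneousSubmodule (Fin 2) ℂ N := by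
    intro a b c
    rw [mem_homogeneousSubmodule]
    have ha : (a : S2).IsHomogeneous e := (mem_homogeneousSubmodule _ _).1 a.2
    have hb : (b : S2).IsHomogeneous e := (mem_homogeneousSubmodule _ _).1 b.2
    refine ((hadd ▸ ha.mul hf0).add (hadd ▸ hb.mul hf1)).add ?_
    rw [smul_eq_C_mul]
    exact hh.C_mul c
  set Φ : (homogeneousSubmodule (Fin 2) ℂ e × homogeneousSubmodule (Fin 2) ℂ e × ℂ) →ₗ[ℂ]
      homogeneousSubmodule (Fin 2) ℂ N :=
    { toFun := fun x => ⟨(x.1 : S2) * f0 + (x.2.1 : S2) * f1 + x.2.2 • h,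
        hmem x.1 x.2.1 x.2.2⟩
      map_add' := by
        rintro ⟨a, b, c⟩ ⟨a', b', c'⟩
        apply Subtype.ext
        simp only [Prod.fst_add, Prod.snd_add, Submodule.coe_add, AddSubmonoid.mk_add_mk]
        ring_nf
        rw [add_smul]
        ring
      map_smul' := by
        rintro t ⟨a, b, c⟩
        apply Subtype.ext
        simp only [Prod.smul_fst, Prod.smul_snd, Submodule.coe_smul, RingHom.id_apply,
          SetLike.val_smul, smul_eq_mul]
        rw [smul_add, smul_add, smul_mul_assoc, smul_mul_assoc, mul_smul]
    } with hΦ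
  have hinj : Function.Injective Φ := by
    rw [injective_iff_map_eq_zero]
    rintro ⟨⟨a, ha⟩, ⟨b, hb⟩, c⟩ hx
    have hval : a * f0 + b * f1 + c • h = 0 := congrArg Subtype.val hx
    have hc : c = 0 := by
      by_contra hc
      apply hnot
      rw [smul_eq_C_mul] at hval
      have hcc : (C c : S2) * C c⁻¹ = 1 := by rw [← C_mul, mul_inv_cancel₀ hc, C_1]
      rw [Ideal.mem_span_pair]
      refine ⟨-(C c⁻¹) * a, -(C c⁻¹) * b, ?_⟩
      linear_combination (-(C c⁻¹ : S2)) * hval + h * hcc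
    subst hc
    rw [zero_smul, add_zero] at hval
    have hae : (a : S2).IsHomogeneous e := (mem_homogeneousSubmodule _ _).1 ha
    have hbe : (b : S2).IsHomogeneous e := (mem_homogeneousSubmodule _ _).1 hb
    have ha0 : a = 0 := by
      by_contra ha0
      have hdvd : f1 ∣ a * f0 := ⟨-b, by linear_combination hval⟩
      have hdvda : f1 ∣ a := (isRelPrime_pderivs hd hf hsf).symm.dvd_of_dvd_mul_right hdvd
      have h1 := totalDegree_le_of_dvd hdvda ha0
      rw [hf1.totalDegree hn1, hae.totalDegree ha0] at h1
      omega
    have hb0 : b = 0 := by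
      rw [ha0, zero_mul, zero_add] at hval
      rcases mul_eq_zero.1 hval with h1 | h1
      · exact h1
      · exact absurd h1 hn1
    refine Prod.ext (Subtype.ext ha0) (Prod.ext (Subtype.ext hb0) rfl)
  have hrank : Module.finrank ℂ
      (homogeneousSubmodule (Fin 2) ℂ e × homogeneousSubmodule (Fin 2) ℂ e × ℂ) =
      Module.finrank ℂ (homogeneousSubmodule (Fin 2) ℂ N) := by
    rw [Module.finrank_prod, Module.finrank_prod, homFinrank, homFinrank,
      Module.finrank_self]
    omega
  have hsurj := (LinearMap.injective_iff_surjective_of_finrank_eq_finrank hrank).1 hinj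
  obtain ⟨⟨a, b, c⟩, hx⟩ := hsurj ⟨p, (mem_homogeneousSubmodule _ _).2 hp⟩
  have hval : (a : S2) * f0 + (b : S2) * f1 + c • h = p := congrArg Subtype.val hx
  refine ⟨c, ?_⟩
  rw [Ideal.mem_span_pair]
  exact ⟨a, b, by linear_combination hval⟩


lemma comp_isHomogeneous {P : T3} {n k : ℕ} (hP : P.IsHomogeneous n) :
    (weightedHomogeneousComponent wY k P).IsHomogeneous n := by
  classical
  rw [isHomogeneous_iff_deg'] at hP ⊢
  intro m hm
  rw [coeff_weightedHomogeneousComponent] at hm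
  split_ifs at hm with hw
  · exact hP m hm
  · exact absurd rfl hm


end Stmt14Aux
end

open Stmt14Aux in
/-- Let `f ∈ ℂ[X₀,X₁]` be homogeneous of degree `d ≥ 3` and squarefree,
`F = Y^d − f(X₀,X₁)`, `ζ` a primitive `d`-th root of unity, and `σ` the algebra automorphism
of `ℂ[Y,X₀,X₁]` with `σ(Y) = ζY`, `σ(Xᵢ) = Xᵢ`.  Then `σ(J_F) = J_F`, so `σ` induces an
automorphism `σ̄` of `R_F^{2d−3}`, whose `ζ`-eigenspace is one-dimensional, spanned by the
class of `Y·h` for any `h ∈ S^{2d−4}` with `h ∉ J_f`: in terms of representatives, for any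
such `h` the class of `Y·h` is a nonzero `ζ`-eigenvector, and any homogeneous `P` of degree
`2d−3` whose class is a `ζ`-eigenvector is congruent to a multiple of `Y·h` modulo `J_F`. -/
theorem stmt14 (d : ℕ) (hd : 3 ≤ d) (f : MvPolynomial (Fin 2) ℂ)
    (hf : f.IsHomogeneous d) (hsf : Squarefree f)
    (ζ : ℂ) (hζ : IsPrimitiveRoot ζ d) :
    Ideal.map (sigmaAut ζ) (jacIdealT d f) = jacIdealT d f ∧
    ∀ h : MvPolynomial (Fin 2) ℂ, h.IsHomogeneous (2 * d - 4) → h ∉ jacIdealS f →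
      (X 0 * embS h ∉ jacIdealT d f) ∧
      sigmaAut ζ (X 0 * embS h) - ζ • (X 0 * embS h) ∈ jacIdealT d f ∧
      ∀ P : MvPolynomial (Fin 3) ℂ, P.IsHomogeneous (2 * d - 3) →
        sigmaAut ζ P - ζ • P ∈ jacIdealT d f →
          ∃ c : ℂ, P - c • (X 0 * embS h) ∈ jacIdealT d f := by
  classical
  have hd0 : (d : ℕ) ≠ 0 := by omega
  have hζ0 : ζ ≠ 0 := hζ.ne_zero hd0
  constructor
  · -- σ(J_F) = J_F
    rw [jacIdealT, Ideal.map_span, Set.image_insert_eq, Set.image_insert_eq,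
      Set.image_singleton]
    have h0 : sigmaAut ζ (pderiv 0 (bigF d f)) = ζ ^ (d - 1) • pderiv 0 (bigF d f) := by
      rw [pd0, map_mul, map_pow, sigma_X0, map_natCast, smul_pow, mul_smul_comm]
    have h1 : sigmaAut ζ (pderiv 1 (bigF d f)) = pderiv 1 (bigF d f) := by
      rw [pd1, map_neg, sigma_embS]
    have h2 : sigmaAut ζ (pderiv 2 (bigF d f)) = pderiv 2 (bigF d f) := by
      rw [pd2, map_neg, sigma_embS]
    rw [h0, h1, h2]
    have hzpow : (ζ ^ (d - 1)) ≠ 0 := pow_ne_zero _ hζ0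
    apply le_antisymm
    · rw [Ideal.span_le]
      intro x hx
      simp only [Set.mem_insert_iff, Set.mem_singleton_iff] at hx
      rcases hx with rfl | rfl | rfl
      · rw [smul_eq_C_mul]
        exact Ideal.mul_mem_left _ _ (Ideal.subset_span (by simp))
      · exact Ideal.subset_span (by simp)
      · exact Ideal.subset_span (by simp)
    · rw [Ideal.span_le]
      intro x hx
      simp only [Set.mem_insert_iff, Set.mem_singleton_iff] at hx
      rcases hx with rfl | rfl | rfl
      · have hrw : pderiv 0 (bigF d f) =
            C ((ζ ^ (d - 1))⁻¹) * (ζ ^ (d - 1) • pderiv 0 (bigF d f)) := by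
          rw [smul_eq_C_mul, ← mul_assoc, ← C_mul, inv_mul_cancel₀ hzpow, C_1, one_mul]
        have hmem0 := Ideal.mul_mem_left _ (C ((ζ ^ (d - 1))⁻¹))
          (Ideal.subset_span (show ζ ^ (d - 1) • pderiv 0 (bigF d f) ∈ _ by simp) :
            ζ ^ (d - 1) • pderiv 0 (bigF d f) ∈ Ideal.span {ζ ^ (d - 1) • pderiv 0 (bigF d f),
              pderiv 1 (bigF d f), pderiv 2 (bigF d f)})
        rwa [← hrw] at hmem0
      · exact Ideal.subset_span (by simp)
      · exact Ideal.subset_span (by simp)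
  · intro h hh hnot
    have hnot' : h ∉ Ideal.span {pderiv 0 f, pderiv 1 f} := by rwa [jacIdealS] at hnot
    refine ⟨?_, ?_, ?_⟩
    · -- Y·h ∉ J_F
      intro hmem
      apply hnot
      rw [jacT_eq hd] at hmem
      rw [Ideal.mem_span_insert] at hmem
      obtain ⟨A, z, hz, heq⟩ := hmem
      rw [Ideal.mem_span_pair] at hz
      obtain ⟨B, C', rfl⟩ := hz
      have hwh : IsWeightedHomogeneous wY (X 0 * embS h) 1 := by
        have := (wh_X0pow 1).mul (wh_embS h)
        rwa [pow_one] at this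
      have hcomp := congrArg (weightedHomogeneousComponent wY 1) heq
      rw [IsWeightedHomogeneous.weightedHomogeneousComponent_same hwh, map_add,
        comp_mul_wh (wh_X0pow (d - 1)), if_neg (by omega), map_add,
        comp_mul_wh (wh_embS (pderiv 0 f)), if_pos (by omega),
        comp_mul_wh (wh_embS (pderiv 1 f)), if_pos (by omega), zero_add] at hcomp
      simp only [Nat.sub_zero] at hcomp
      obtain ⟨b, hb, -⟩ :=
        wh1_decomp (weightedHomogeneousComponent_isWeightedHomogeneous (w := wY) 1 B)
      obtain ⟨c', hc', -⟩ :=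
        wh1_decomp (weightedHomogeneousComponent_isWeightedHomogeneous (w := wY) 1 C')
      rw [hb, hc'] at hcomp
      have hXq : X 0 * embS h = X 0 * embS (b * pderiv 0 f + c' * pderiv 1 f) := by
        rw [hcomp, map_add, map_mul, map_mul]
        ring
      have hq := mul_left_cancel₀ (X_ne_zero (0 : Fin 3)) hXq
      have hq2 : h = b * pderiv 0 f + c' * pderiv 1 f :=
        rename_injective Fin.succ (Fin.succ_injective 2) hq
      rw [jacIdealS, Ideal.mem_span_pair]
      exact ⟨b, c', hq2.symm⟩
    · -- Y·h is an eigenvector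
      rw [map_mul, sigma_X0, sigma_embS, smul_mul_assoc, sub_self]
      exact zero_mem _
    · -- any homogeneous eigenvector is a multiple of Y·h mod J_F
      intro P hP hPmem
      have hcompmem : ∀ k, k ≠ 1 →
          weightedHomogeneousComponent wY k P ∈ jacIdealT d f := by
        intro k hk
        have h1 := comp_mem_jacT hd hPmem k
        rw [map_sub, LinearMap.map_smul, comp_sigma, ← sub_smul] at h1
        by_cases hzk : ζ ^ k = ζ
        · have hkd : d ≤ k := by
            by_contra hkd
            push_neg at hkd
            have := hζ.pow_inj (show k < d by omega) (show 1 < d by omega)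
              (by rw [hzk, pow_one])
            omega
          obtain ⟨t, ht⟩ := X0pow_dvd_wh
            (weightedHomogeneousComponent_isWeightedHomogeneous (w := wY) k P)
            (show d - 1 ≤ k by omega)
          rw [ht, jacT_eq hd]
          exact Ideal.mul_mem_right _ _ (Ideal.subset_span (by simp))
        · have hne : ζ ^ k - ζ ≠ 0 := sub_ne_zero.2 hzk
          have hrw : weightedHomogeneousComponent wY k P =
              C ((ζ ^ k - ζ)⁻¹) * ((ζ ^ k - ζ) • weightedHomogeneousComponent wY k P) := by
            rw [smul_eq_C_mul, ← mul_assoc, ← C_mul, inv_mul_cancel₀ hne, C_1, one_mul]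
          rw [hrw]
          exact Ideal.mul_mem_left _ _ h1
      have hfin := weightedHomogeneousComponent_finsupp (w := wY) P
      have hsum : ∑ k ∈ hfin.toFinset, weightedHomogeneousComponent wY k P = P := by
        rw [← finsum_eq_sum _ hfin]
        exact sum_weightedHomogeneousComponent wY P
      have hsplit : P - weightedHomogeneousComponent wY 1 P ∈ jacIdealT d f := by
        by_cases h1s : 1 ∈ hfin.toFinset
        · have heq2 : P - weightedHomogeneousComponent wY 1 P =
              ∑ k ∈ hfin.toFinset.erase 1, weightedHomogeneousComponent wY k P := by
            rw [Finset.sum_erase_eq_sub h1s, hsum]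
          rw [heq2]
          exact Ideal.sum_mem _ (fun k hk => hcompmem k (Finset.ne_of_mem_erase hk))
        · have hc10 : weightedHomogeneousComponent wY 1 P = 0 := by
            by_contra hc
            exact h1s (hfin.mem_toFinset.2 hc)
          rw [hc10, sub_zero, ← hsum]
          exact Ideal.sum_mem _ (fun k hk => hcompmem k (fun he => h1s (he ▸ hk)))
      obtain ⟨p₁, hp₁eq, hp₁hom⟩ :=
        wh1_decomp (weightedHomogeneousComponent_isWeightedHomogeneous (w := wY) 1 P)
      have hp1h : p₁.IsHomogeneous (2 * d - 4) := by
        have := hp₁hom (2 * d - 3) (comp_isHomogeneous hP)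
        rwa [show 2 * d - 3 - 1 = 2 * d - 4 by omega] at this
      obtain ⟨c, hc⟩ := exists_smul_sub_mem hd hf hsf hh hnot' hp1h
      refine ⟨c, ?_⟩
      have hkey : P - c • (X 0 * embS h) =
          (P - weightedHomogeneousComponent wY 1 P) + X 0 * embS (p₁ - c • h) := by
        rw [map_sub, map_smul, mul_sub, mul_smul_comm, ← hp₁eq]
        abel
      rw [hkey]
      refine Ideal.add_mem _ hsplit ?_
      rw [Ideal.mem_span_pair] at hc
      obtain ⟨u, v, huv⟩ := hc
      rw [← huv, map_add, map_mul, map_mul, jacT_eq hd, mul_add]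
      refine Ideal.add_mem _ ?_ ?_
      · exact Ideal.mul_mem_left _ _ (Ideal.mul_mem_left _ _ (Ideal.subset_span (by simp)))
      · exact Ideal.mul_mem_left _ _ (Ideal.mul_mem_left _ _ (Ideal.subset_span (by simp)))
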